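/- For every finite word w and letter a, the G-defect satisfies D_G(w) ≤ D_G(wa) ≤ D_G(w) + 1. -/

import Mathlib

def IsMorphism {A : Type*} (f : List A → List A) : Prop :=
  ∀ v w : List A, f (v ++ w) = f v ++ f w

def IsAntimorphism {A : Type*} (f : List A → List A) : Prop :=
  ∀ v w : List A, f (v ++ w) = f w ++ f v

structure AMGroup (A : Type*) where
  carrier : Set (List A → List A)
  finite : carrier.Finite
  id_mem : id ∈ carrier
  comp_mem : ∀ f ∈ carrier, ∀ g ∈ carrier, f ∘ g ∈ carrier
  inv_mem : ∀ f ∈ carrier, ∃ g ∈ carrier, f ∘ g = id ∧ g ∘ f = id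
  morph_or_anti : ∀ f ∈ carrier, IsMorphism f ∨ IsAntimorphism f

/-- `v` is a `G`-palindrome: fixed by some antimorphism of `G`. -/
def GPal {A : Type*} (G : AMGroup A) (v : List A) : Prop :=
  ∃ Θ ∈ G.carrier, IsAntimorphism Θ ∧ Θ v = v

/-- The `G`-orbit (equivalence class) `[v]` of a word `v`. -/
def orbitG {A : Type*} (G : AMGroup A) (v : List A) : Set (List A) :=
  {x : List A | ∃ μ ∈ G.carrier, x = μ v}

/-- `Pal_G(w)`: the set of `G`-classes of `G`-palindromic factors of `w`
(including the empty word). -/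
def PalG {A : Type*} (G : AMGroup A) (w : List A) : Set (Set (List A)) :=
  {S | ∃ v : List A, v <:+: w ∧ GPal G v ∧ S = orbitG G v}

/-- `γ_G(w)`: the number of classes `[a]` of letters occurring in `w` that are
fixed by no antimorphism of `G`. -/
noncomputable def gammaG {A : Type*} (G : AMGroup A) (w : List A) : ℕ :=
  {S : Set (List A) | ∃ a : A, a ∈ w ∧
    (∀ Θ ∈ G.carrier, IsAntimorphism Θ → Θ [a] ≠ [a]) ∧ S = orbitG G [a]}.ncard

/-- The `G`-defect of a finite word. -/
noncomputable def DG {A : Type*} (G : AMGroup A) (w : List A) : ℕ :=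
  w.length + 1 - (PalG G w).ncard - gammaG G w

namespace AMAux

variable {A : Type*}

def GammaSet (G : AMGroup A) (w : List A) : Set (Set (List A)) :=
  {S : Set (List A) | ∃ a : A, a ∈ w ∧
    (∀ Θ ∈ G.carrier, IsAntimorphism Θ → Θ [a] ≠ [a]) ∧ S = orbitG G [a]}

lemma gammaG_eq (G : AMGroup A) (w : List A) : gammaG G w = (GammaSet G w).ncard := rfl

lemma map_nil {f : List A → List A} (h : IsMorphism f ∨ IsAntimorphism f) : f [] = [] := by
  have h2 : f [] = f [] ++ f [] := by
    rcases h with h | h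
    · simpa using h [] []
    · simpa using h [] []
  have := congrArg List.length h2
  simp only [List.length_append] at this
  exact List.length_eq_zero_iff.mp (by omega)

lemma map_nil' (G : AMGroup A) {f : List A → List A} (hf : f ∈ G.carrier) : f [] = [] :=
  map_nil (G.morph_or_anti f hf)

/-- Inverses, with their pointwise and structural properties. -/
lemma inv_spec (G : AMGroup A) {f : List A → List A} (hf : f ∈ G.carrier) :
    ∃ g ∈ G.carrier, (∀ v, f (g v) = v) ∧ (∀ v, g (f v) = v) ∧
      (IsMorphism f → IsMorphism g) ∧ (IsAntimorphism f → IsAntimorphism g) := by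
  obtain ⟨g, hg, hfg, hgf⟩ := G.inv_mem f hf
  have hfg' : ∀ v, f (g v) = v := fun v => congrFun hfg v
  have hgf' : ∀ v, g (f v) = v := fun v => congrFun hgf v
  have hinj : Function.Injective f := Function.LeftInverse.injective hgf'
  refine ⟨g, hg, hfg', hgf', ?_, ?_⟩
  · intro hm v u
    apply hinj
    rw [hfg', hm, hfg', hfg']
  · intro hm v u
    apply hinj
    rw [hfg', hm, hfg', hfg']

lemma comp_anti_anti {f g : List A → List A} (hf : IsAntimorphism f)
    (hg : IsAntimorphism g) : IsMorphism (f ∘ g) := by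
  intro v u; simp only [Function.comp_apply]; rw [hg, hf]

lemma comp_morph_anti {f g : List A → List A} (hf : IsMorphism f)
    (hg : IsAntimorphism g) : IsAntimorphism (f ∘ g) := by
  intro v u; simp only [Function.comp_apply]; rw [hg, hf]

lemma comp_anti_morph {f g : List A → List A} (hf : IsAntimorphism f)
    (hg : IsMorphism g) : IsAntimorphism (f ∘ g) := by
  intro v u; simp only [Function.comp_apply]; rw [hg, hf]

lemma comp_morph_morph {f g : List A → List A} (hf : IsMorphism f)
    (hg : IsMorphism g) : IsMorphism (f ∘ g) := by
  intro v u; simp only [Function.comp_apply]; rw [hg, hf]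

lemma apply_letter_ne_nil (G : AMGroup A) {f : List A → List A} (hf : f ∈ G.carrier)
    (a : A) : f [a] ≠ [] := by
  obtain ⟨g, hg, hfg, hgf, _, _⟩ := inv_spec G hf
  intro h
  have : g (f [a]) = [a] := hgf [a]
  rw [h, map_nil' G hg] at this
  exact List.cons_ne_nil a [] this.symm

lemma len_ge (G : AMGroup A) {f : List A → List A} (hf : f ∈ G.carrier) :
    ∀ v : List A, v.length ≤ (f v).length := by
  intro v
  induction v with
  | nil => simp
  | cons b t ih =>
    have h1 : f (b :: t) = f ([b] ++ t) := by simp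
    have hne : f [b] ≠ [] := apply_letter_ne_nil G hf b
    have hlb : 1 ≤ (f [b]).length := by
      cases h : f [b] with
      | nil => exact absurd h hne
      | cons x xs => simp
    rcases G.morph_or_anti f hf with hm | hm
    · rw [h1, hm]
      simp only [List.length_append, List.length_cons]
      omega
    · rw [h1, hm]
      simp only [List.length_append, List.length_cons]
      omega

lemma letter_len (G : AMGroup A) {f : List A → List A} (hf : f ∈ G.carrier) (a : A) :
    (f [a]).length = 1 := by
  obtain ⟨g, hg, hfg, hgf, _, _⟩ := inv_spec G hf
  have h1 : (f [a]).length ≤ (g (f [a])).length := len_ge G hg (f [a])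
  rw [hgf [a]] at h1
  have h2 : (1 : ℕ) ≤ (f [a]).length := by simpa using len_ge G hf [a]
  simp at h1
  omega

lemma letter_img (G : AMGroup A) {f : List A → List A} (hf : f ∈ G.carrier) (a : A) :
    ∃ b, f [a] = [b] := List.length_eq_one_iff.mp (letter_len G hf a)

lemma len_eq (G : AMGroup A) {f : List A → List A} (hf : f ∈ G.carrier) :
    ∀ v : List A, (f v).length = v.length := by
  intro v
  induction v with
  | nil => rw [map_nil' G hf]
  | cons b t ih =>
    have h1 : f (b :: t) = f ([b] ++ t) := by simp
    have hlb : (f [b]).length = 1 := letter_len G hf b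
    rcases G.morph_or_anti f hf with hm | hm
    · rw [h1, hm]; simp only [List.length_append, List.length_cons]; omega
    · rw [h1, hm]; simp only [List.length_append, List.length_cons]; omega

lemma mem_orbit_self (G : AMGroup A) (v : List A) : v ∈ orbitG G v :=
  ⟨id, G.id_mem, rfl⟩

lemma orbit_apply (G : AMGroup A) {μ : List A → List A} (hμ : μ ∈ G.carrier) (v : List A) :
    orbitG G (μ v) = orbitG G v := by
  obtain ⟨g, hg, hμg, hgμ, _, _⟩ := inv_spec G hμ
  ext x
  constructor
  · rintro ⟨ν, hν, rfl⟩
    exact ⟨ν ∘ μ, G.comp_mem ν hν μ hμ, rfl⟩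
  · rintro ⟨ν, hν, rfl⟩
    refine ⟨ν ∘ g, G.comp_mem ν hν g hg, ?_⟩
    simp [hgμ v]

lemma gpal_nil (G : AMGroup A) (hanti : ∃ Θ ∈ G.carrier, IsAntimorphism Θ) :
    GPal G [] := by
  obtain ⟨Θ, hΘ, ha⟩ := hanti
  exact ⟨Θ, hΘ, ha, map_nil' G hΘ⟩

lemma gpal_apply (G : AMGroup A) {μ : List A → List A} (hμ : μ ∈ G.carrier)
    {v : List A} (h : GPal G v) : GPal G (μ v) := by
  obtain ⟨Θ, hΘ, hΘa, hΘv⟩ := h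
  obtain ⟨g, hg, hμg, hgμ, hmi, hai⟩ := inv_spec G hμ
  refine ⟨μ ∘ (Θ ∘ g), G.comp_mem μ hμ _ (G.comp_mem Θ hΘ g hg), ?_, ?_⟩
  · rcases G.morph_or_anti μ hμ with hm | hm
    · exact comp_morph_anti hm (comp_anti_morph hΘa (hmi hm))
    · exact comp_anti_morph hm (comp_anti_anti hΘa (hai hm))
  · show μ (Θ (g (μ v))) = μ v
    rw [hgμ v, hΘv]

lemma gpal_iff_apply (G : AMGroup A) {μ : List A → List A} (hμ : μ ∈ G.carrier)
    (v : List A) : GPal G (μ v) ↔ GPal G v := by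
  obtain ⟨g, hg, hμg, hgμ, _, _⟩ := inv_spec G hμ
  constructor
  · intro h
    have := gpal_apply G hg h
    rwa [hgμ v] at this
  · exact gpal_apply G hμ

lemma palG_finite (G : AMGroup A) (w : List A) : (PalG G w).Finite := by
  have h : PalG G w ⊆ (orbitG G) '' {v | v ∈ w.sublists} := by
    rintro S ⟨v, hv, _, rfl⟩
    exact ⟨v, List.mem_sublists.mpr hv.sublist, rfl⟩
  exact Set.Finite.subset (Set.Finite.image _ (List.finite_toSet _)) h

lemma gamma_finite (G : AMGroup A) [Finite A] (w : List A) : (GammaSet G w).Finite := by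
  have h : GammaSet G w ⊆ (fun a => orbitG G [a]) '' Set.univ := by
    rintro S ⟨a, _, _, rfl⟩
    exact ⟨a, Set.mem_univ a, rfl⟩
  exact Set.Finite.subset (Set.Finite.image _ Set.finite_univ) h

lemma pal_gamma_disjoint (G : AMGroup A) (w w' : List A) :
    Disjoint (PalG G w) (GammaSet G w') := by
  rw [Set.disjoint_left]
  rintro S ⟨v, hv, hgp, rfl⟩ ⟨a, ha, hcond, heq⟩
  have hmem : [a] ∈ orbitG G v := by
    rw [heq]; exact mem_orbit_self G [a]
  obtain ⟨μ, hμ, hμv⟩ := hmem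
  have : GPal G [a] := by
    rw [hμv]; exact gpal_apply G hμ hgp
  obtain ⟨Θ, hΘ, hΘa, hΘv⟩ := this
  exact hcond Θ hΘ hΘa hΘv

lemma infix_snoc {v w : List A} {a : A} (h : v <:+: w ++ [a]) :
    v <:+: w ∨ v <:+ w ++ [a] := by
  obtain ⟨s, t, hst⟩ := h
  rcases List.eq_nil_or_concat t with rfl | ⟨t', c, rfl⟩
  · right
    exact ⟨s, by simpa using hst⟩
  · left
    have h2 : (s ++ v ++ t') ++ [c] = w ++ [a] := by
      rw [← hst]; simp [List.concat_eq_append]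
    have := (List.append_inj' h2 rfl).1
    exact ⟨s, t', by rw [this]⟩

lemma infix_mid {w x y z : List A} {a : A} (h : x ++ y ++ z = w ++ [a]) (hz : z ≠ []) :
    y <:+: w := by
  rcases List.eq_nil_or_concat z with rfl | ⟨z', c, rfl⟩
  · exact absurd rfl hz
  · have h2 : (x ++ y ++ z') ++ [c] = w ++ [a] := by
      rw [← h]; simp [List.concat_eq_append]
    have := (List.append_inj' h2 rfl).1
    exact ⟨x, z', by rw [this]⟩

lemma nil_mem_palG (G : AMGroup A) (hanti : ∃ Θ ∈ G.carrier, IsAntimorphism Θ)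
    (w : List A) : orbitG G [] ∈ PalG G w :=
  ⟨[], ⟨[], w, by simp⟩, gpal_nil G hanti, rfl⟩

lemma palG_mono (G : AMGroup A) (w : List A) (a : A) :
    PalG G w ⊆ PalG G (w ++ [a]) := by
  rintro S ⟨v, ⟨s, t, hst⟩, hgp, rfl⟩
  exact ⟨v, ⟨s, t ++ [a], by rw [← List.append_assoc, hst]⟩, hgp, rfl⟩

lemma gamma_mono (G : AMGroup A) (w : List A) (a : A) :
    GammaSet G w ⊆ GammaSet G (w ++ [a]) := by
  rintro S ⟨b, hb, hcond, rfl⟩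
  exact ⟨b, List.mem_append_left _ hb, hcond, rfl⟩

end AMAux

namespace AMAux

variable {A : Type*}

lemma key (G : AMGroup A) (hanti : ∃ Θ ∈ G.carrier, IsAntimorphism Θ)
    (w : List A) (a : A) :
    ∃ X : Set (List A), PalG G (w ++ [a]) ⊆ PalG G w ∪ {X} ∧
      GammaSet G (w ++ [a]) ⊆ GammaSet G w ∪ {X} := by
  by_cases h : ∃ v, v <:+: (w ++ [a]) ∧ GPal G v ∧ orbitG G v ∉ PalG G w
  · -- there is a new palindromic class
    set N : Set (List A) :=
      {v | v <:+: (w ++ [a]) ∧ GPal G v ∧ orbitG G v ∉ PalG G w} with hN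
    have hNfin : N.Finite := by
      apply Set.Finite.subset (List.finite_toSet (w ++ [a]).sublists)
      rintro v ⟨hv, _, _⟩
      exact List.mem_sublists.mpr hv.sublist
    obtain ⟨v₀, hv₀, hmax⟩ := Set.Finite.exists_maximalFor List.length N hNfin h
    obtain ⟨hv₀inf, hv₀gp, hv₀new⟩ := hv₀
    -- every element of N is a suffix of w ++ [a]
    have hsuf : ∀ v ∈ N, v <:+ w ++ [a] := by
      rintro v ⟨hvinf, hvgp, hvnew⟩
      rcases infix_snoc hvinf with hvw | hvs
      · exact absurd ⟨v, hvw, hvgp, rfl⟩ hvnew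
      · exact hvs
    have hv₀suf : v₀ <:+ w ++ [a] := hsuf v₀ ⟨hv₀inf, hv₀gp, hv₀new⟩
    -- every element of N equals v₀
    have huniq : ∀ v ∈ N, v = v₀ := by
      intro v hvN
      obtain ⟨hvinf, hvgp, hvnew⟩ := hvN
      have hvsuf : v <:+ w ++ [a] := hsuf v ⟨hvinf, hvgp, hvnew⟩
      have hlen : v.length ≤ v₀.length := by
        by_contra hlt
        push_neg at hlt
        have := hmax ⟨hvinf, hvgp, hvnew⟩ (le_of_lt hlt)
        omega
      have hvv₀ : v <:+ v₀ := List.suffix_of_suffix_length_le hvsuf hv₀suf hlen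
      rcases eq_or_lt_of_le hlen with heq | hlt
      · exact List.Sublist.eq_of_length hvv₀.sublist heq
      · -- strict: contradiction
        exfalso
        obtain ⟨p, hp⟩ := hvv₀
        have hpne : p ≠ [] := by
          intro hpnil
          subst hpnil
          simp only [List.nil_append] at hp
          subst hp
          omega
        obtain ⟨Θ, hΘ, hΘa, hΘfix⟩ := hv₀gp
        have hsplit : v₀ = Θ v ++ Θ p := by
          conv_lhs => rw [← hΘfix, ← hp]
          rw [hΘa]
        obtain ⟨s, hs⟩ := hv₀suf
        have hmid : s ++ Θ v ++ Θ p = w ++ [a] := by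
          rw [List.append_assoc, ← hsplit, hs]
        have hΘpne : Θ p ≠ [] := by
          intro hnil
          have := len_eq G hΘ p
          rw [hnil] at this
          simp at this
          exact hpne (List.length_eq_zero_iff.mp this.symm)
        have hΘvinf : Θ v <:+: w := infix_mid hmid hΘpne
        have : orbitG G v ∈ PalG G w :=
          ⟨Θ v, hΘvinf, gpal_apply G hΘ hvgp, (orbit_apply G hΘ v).symm⟩
        exact hvnew this
    refine ⟨orbitG G v₀, ?_, ?_⟩
    · rintro S ⟨v, hvinf, hvgp, rfl⟩
      by_cases horb : orbitG G v ∈ PalG G w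
      · exact Or.inl horb
      · have : v = v₀ := huniq v ⟨hvinf, hvgp, horb⟩
        right
        rw [this]
        rfl
    · rintro S ⟨b, hb, hcond, rfl⟩
      rcases List.mem_append.mp hb with hbw | hba
      · exact Or.inl ⟨b, hbw, hcond, rfl⟩
      · have hba' : b = a := by simpa using hba
        subst hba'
        -- show orbit [b] ∈ GammaSet G w using the structure of v₀
        left
        have hv₀ne : v₀ ≠ [] := by
          intro hnil
          rw [hnil] at hv₀new
          exact hv₀new (nil_mem_palG G hanti w)
        rcases List.eq_nil_or_concat v₀ with hnil | ⟨y, c, hyc⟩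
        · exact absurd hnil hv₀ne
        · rw [List.concat_eq_append] at hyc
          obtain ⟨s, hs⟩ := hv₀suf
          rw [hyc, ← List.append_assoc] at hs
          obtain ⟨hsy, hca⟩ := List.append_inj' hs rfl
          have hca' : c = b := by simpa using hca
          subst hca'
          obtain ⟨Θ, hΘ, hΘa, hΘfix⟩ := hv₀gp
          obtain ⟨b', hb'⟩ := letter_img G hΘ c
          have hsplit : [b'] ++ Θ y = y ++ [c] := by
            rw [← hb', ← hΘa, ← hyc, hΘfix, hyc]
          rcases List.eq_nil_or_concat y with hynil | ⟨y', d, hyd⟩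
          · -- v₀ = [c], so Θ [c] = [c], contradicting hcond
            exfalso
            rw [hynil, map_nil' G hΘ] at hsplit
            simp at hsplit
            rw [hsplit] at hb'
            exact hcond Θ hΘ hΘa hb'
          · -- first letter of v₀ is b' = head of y, which occurs in w
            have hyne : y ≠ [] := by rw [hyd]; simp [List.concat_eq_append]
            obtain ⟨d', y'', hdy⟩ := List.exists_cons_of_ne_nil hyne
            have hb'd : b' = d' := by
              rw [hdy] at hsplit
              simp only [List.singleton_append, List.cons_append] at hsplit
              exact (List.cons_eq_cons.mp hsplit).1
            have hd'w : d' ∈ w := by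
              rw [← hsy]
              apply List.mem_append_right
              rw [hdy]
              exact List.mem_cons_self
            refine ⟨d', hd'w, ?_, ?_⟩
            · intro Θ'' hΘ'' hΘ''a heq''
              have hgd : GPal G [d'] := ⟨Θ'', hΘ'', hΘ''a, heq''⟩
              have : GPal G (Θ [c]) := by rw [hb', hb'd]; exact hgd
              have hgc : GPal G [c] := (gpal_iff_apply G hΘ [c]).mp this
              obtain ⟨Θ₃, hΘ₃, hΘ₃a, hΘ₃fix⟩ := hgc
              exact hcond Θ₃ hΘ₃ hΘ₃a hΘ₃fix
            · have := orbit_apply G hΘ [c]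
              rw [hb', hb'd] at this
              exact this.symm
  · -- no new palindromic class
    push_neg at h
    refine ⟨orbitG G [a], ?_, ?_⟩
    · rintro S ⟨v, hvinf, hvgp, rfl⟩
      exact Or.inl (h v hvinf hvgp)
    · rintro S ⟨b, hb, hcond, rfl⟩
      rcases List.mem_append.mp hb with hbw | hba
      · exact Or.inl ⟨b, hbw, hcond, rfl⟩
      · have : b = a := by simpa using hba
        right
        rw [this]
        rfl

end AMAux

/-- Appending a letter changes the `G`-defect by at most one and never
decreases it: `D_G(w) ≤ D_G(wa) ≤ D_G(w) + 1`. -/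
theorem DG_append_letter {A : Type*} [Fintype A] (G : AMGroup A)
    (hanti : ∃ Θ ∈ G.carrier, IsAntimorphism Θ)
    (w : List A) (a : A) :
    DG G w ≤ DG G (w ++ [a]) ∧ DG G (w ++ [a]) ≤ DG G w + 1 := by
  classical
  obtain ⟨X, hX1, hX2⟩ := AMAux.key G hanti w a
  have hPWfin := AMAux.palG_finite G w
  have hPWAfin := AMAux.palG_finite G (w ++ [a])
  have hGWfin := AMAux.gamma_finite G w
  have hGWAfin := AMAux.gamma_finite G (w ++ [a])
  have hdis : Disjoint (PalG G w) (AMAux.GammaSet G w) :=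
    AMAux.pal_gamma_disjoint G w w
  have hdis' : Disjoint (PalG G (w ++ [a])) (AMAux.GammaSet G (w ++ [a])) :=
    AMAux.pal_gamma_disjoint G (w ++ [a]) (w ++ [a])
  have e1 : (PalG G w ∪ AMAux.GammaSet G w).ncard
      = (PalG G w).ncard + (AMAux.GammaSet G w).ncard :=
    Set.ncard_union_eq hdis hPWfin hGWfin
  have e2 : (PalG G (w ++ [a]) ∪ AMAux.GammaSet G (w ++ [a])).ncard
      = (PalG G (w ++ [a])).ncard + (AMAux.GammaSet G (w ++ [a])).ncard :=
    Set.ncard_union_eq hdis' hPWAfin hGWAfin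
  have hsub1 : PalG G w ∪ AMAux.GammaSet G w
      ⊆ PalG G (w ++ [a]) ∪ AMAux.GammaSet G (w ++ [a]) :=
    Set.union_subset_union (AMAux.palG_mono G w a) (AMAux.gamma_mono G w a)
  have hsub2 : PalG G (w ++ [a]) ∪ AMAux.GammaSet G (w ++ [a])
      ⊆ (PalG G w ∪ AMAux.GammaSet G w) ∪ {X} := by
    rintro S (hS | hS)
    · rcases hX1 hS with h | h
      · exact Or.inl (Or.inl h)
      · exact Or.inr h
    · rcases hX2 hS with h | h
      · exact Or.inl (Or.inr h)
      · exact Or.inr h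
  have hmono : (PalG G w ∪ AMAux.GammaSet G w).ncard
      ≤ (PalG G (w ++ [a]) ∪ AMAux.GammaSet G (w ++ [a])).ncard :=
    Set.ncard_le_ncard hsub1 (hPWAfin.union hGWAfin)
  have hupper : (PalG G (w ++ [a]) ∪ AMAux.GammaSet G (w ++ [a])).ncard
      ≤ (PalG G w ∪ AMAux.GammaSet G w).ncard + 1 := by
    calc (PalG G (w ++ [a]) ∪ AMAux.GammaSet G (w ++ [a])).ncard
        ≤ ((PalG G w ∪ AMAux.GammaSet G w) ∪ {X}).ncard :=
          Set.ncard_le_ncard hsub2 (((hPWfin.union hGWfin).union (Set.finite_singleton X)))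
      _ ≤ (PalG G w ∪ AMAux.GammaSet G w).ncard + ({X} : Set (Set (List A))).ncard :=
          Set.ncard_union_le _ _
      _ = (PalG G w ∪ AMAux.GammaSet G w).ncard + 1 := by rw [Set.ncard_singleton]
  simp only [DG, AMAux.gammaG_eq, List.length_append, List.length_singleton]
  omega
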